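/- The class 𝓙 is closed under weak tail-equivalence: if F ∈ 𝓙 and 0 < liminf_{x→∞} F̄(x)/Ḡ(x) ≤ limsup_{x→∞} F̄(x)/Ḡ(x) < ∞, then G ∈ 𝓙. -/

import Mathlib

open MeasureTheory Filter Set

/-- Tail of a distribution: `F̄(x) = μ(x, ∞)`. -/
noncomputable def tail (μ : Measure ℝ) (x : ℝ) : ℝ := (μ (Set.Ioi x)).toReal

/-- Conditional probability `P(A | X₁ + X₂ > x)` for two i.i.d. variables with law `μ`. -/
noncomputable def condPair (μ : Measure ℝ) (A : Set (ℝ × ℝ)) (x : ℝ) : ℝ :=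
  ((μ.prod μ) (A ∩ {p | x < p.1 + p.2})).toReal / ((μ.prod μ) {p | x < p.1 + p.2}).toReal

/-- The class 𝓙 : `lim_{K→∞} liminf_{x→∞} P(max(X₁,X₂) > x − K | X₁ + X₂ > x) = 1`. -/
def MemJ (μ : Measure ℝ) : Prop :=
  Tendsto (fun K : ℝ =>
      liminf (fun x : ℝ => condPair μ {p | x - K < max p.1 p.2} x) atTop)
    atTop (nhds 1)

/-- The class 𝓙 (equivalent form): for every nonnegative, unbounded, nondecreasing `g`,
`lim_{x→∞} P(min(X₁,X₂) > g(x) | X₁ + X₂ > x) = 0`. -/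
def MemJg (μ : Measure ℝ) : Prop :=
  ∀ g : ℝ → ℝ, (∀ x, 0 ≤ g x) → Monotone g → (∀ M, ∃ x, M < g x) →
    Tendsto (fun x : ℝ => condPair μ {p | g x < min p.1 p.2} x) atTop (nhds 0)

/-- Tail of the two-fold convolution: `F̄²*(x) = P(X₁ + X₂ > x)`. -/
noncomputable def tail2 (μ : Measure ℝ) (x : ℝ) : ℝ := ((μ.prod μ) {p | x < p.1 + p.2}).toReal

/-- Weak asymptotic tail-equivalence `F̄ ≍ Ḡ`:
`0 < liminf F̄(x)/Ḡ(x) ≤ limsup F̄(x)/Ḡ(x) < ∞`. -/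
def WeakTailEquiv (μ ν : Measure ℝ) : Prop :=
  (∃ c : ℝ, 0 < c ∧ ∀ᶠ x in atTop, c * tail ν x ≤ tail μ x) ∧
  (∃ C : ℝ, ∀ᶠ x in atTop, tail μ x ≤ C * tail ν x)

/-- Convolution of two laws on ℝ. -/
noncomputable def conv (μ ν : Measure ℝ) : Measure ℝ :=
  Measure.map (fun p : ℝ × ℝ => p.1 + p.2) (μ.prod ν)

/-- `n`-fold convolution `F^{n*}`. -/
noncomputable def nconv (μ : Measure ℝ) : ℕ → Measure ℝ
  | 0 => Measure.dirac 0
  | n + 1 => conv (nconv μ n) μ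

/-! ### Auxiliary lemmas -/

/-- Comparison of integrals of a monotone function vanishing below `a`, under tail domination. -/
lemma lemA (ρ σ : Measure ℝ) [IsFiniteMeasure ρ] [IsFiniteMeasure σ]
    (a : ℝ) (c : ENNReal) (hc : c ≠ ⊤)
    (h : ∀ y : ℝ, a ≤ y → σ (Set.Ioi y) ≤ c * ρ (Set.Ioi y))
    (w : ℝ → ENNReal) (hw : Monotone w) (hwa : ∀ y, y ≤ a → w y = 0)
    (hwfin : ∀ y, w y ≠ ⊤) :
    ∫⁻ y, w y ∂σ ≤ c * ∫⁻ y, w y ∂ρ := by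
  set f : ℝ → ℝ := fun y => (w y).toReal with hf
  have hfmono : Monotone f := fun y z hyz => ENNReal.toReal_mono (hwfin z) (hw hyz)
  have hfmeas : Measurable f := hfmono.measurable
  have hfnn : ∀ y, 0 ≤ f y := fun y => ENNReal.toReal_nonneg
  -- superlevel set comparison
  have key : ∀ t : ℝ, 0 < t → σ {y | t < f y} ≤ c * ρ {y | t < f y} := by
    intro t ht
    set S := {y : ℝ | t < f y} with hSdef
    have hupper : ∀ {y z : ℝ}, y ∈ S → y ≤ z → z ∈ S := by
      intro y z hy hyz
      exact lt_of_lt_of_le hy (hfmono hyz)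
    have hSa : S ⊆ Set.Ioi a := by
      intro y hy
      by_contra hya
      simp only [Set.mem_Ioi, not_lt] at hya
      have h0 : f y = 0 := by simp [hf, hwa y hya]
      have : t < (0 : ℝ) := h0 ▸ hy
      linarith
    rcases Set.eq_empty_or_nonempty S with hemp | hne
    · simp [hemp]
    · have hbdd : BddBelow S := ⟨a, fun y hy => (hSa hy).le⟩
      set s := sInf S with hs
      have hsa : a ≤ s := le_csInf hne (fun y hy => (hSa hy).le)
      have hIoiS : Set.Ioi s ⊆ S := by
        intro z hz
        obtain ⟨y, hyS, hys⟩ := exists_lt_of_csInf_lt hne hz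
        exact hupper hyS hys.le
      have hSIci : S ⊆ Set.Ici s := fun y hy => csInf_le hbdd hy
      by_cases hsS : s ∈ S
      · -- S = Ici s with a < s; use continuity from above
        have hSeq : S = Set.Ici s := le_antisymm hSIci (fun z hz => hupper hsS hz)
        have has : a < s := hSa hsS
        set u : ℕ → ℝ := fun n => s - (s - a) / (n + 1) with hu
        have hult : ∀ n : ℕ, u n < s := by
          intro n
          have : (0:ℝ) < (s - a) / (n + 1) := by
            apply div_pos (by linarith) (by positivity)
          simp only [hu]
          linarith
        have huge : ∀ n : ℕ, a ≤ u n := by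
          intro n
          have h1 : (s - a) / (n + 1) ≤ s - a := by
            apply div_le_self (by linarith)
            have : (0:ℝ) ≤ (n:ℝ) := Nat.cast_nonneg n
            linarith
          simp only [hu]
          linarith
        have humono : Monotone u := by
          intro n m hnm
          have hc1 : ((n:ℝ) + 1) ≤ ((m:ℝ) + 1) := by
            have := (Nat.cast_le (α := ℝ)).mpr hnm
            linarith
          have h1 : (s - a) / ((m:ℝ) + 1) ≤ (s - a) / ((n:ℝ) + 1) :=
            div_le_div_of_nonneg_left (by linarith) (by positivity) hc1
          simp only [hu]
          linarith
        have hutend : Tendsto u atTop (nhds s) := by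
          have h1 : Tendsto (fun n : ℕ => (s - a) / ((n:ℝ) + 1)) atTop (nhds 0) := by
            apply Tendsto.div_atTop (tendsto_const_nhds)
            exact tendsto_atTop_add_const_right atTop 1 tendsto_natCast_atTop_atTop
          have h2 : Tendsto (fun n : ℕ => s - (s - a) / ((n:ℝ) + 1)) atTop (nhds (s - 0)) :=
            (tendsto_const_nhds : Tendsto (fun _ : ℕ => s) atTop (nhds s)).sub h1
          simpa [hu] using h2
        have hiInter : (⋂ n : ℕ, Set.Ioi (u n)) = Set.Ici s := by
          ext z
          simp only [Set.mem_iInter, Set.mem_Ioi, Set.mem_Ici]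
          constructor
          · intro hz
            exact le_of_tendsto hutend (Eventually.of_forall fun n => (hz n).le)
          · intro hz n
            exact lt_of_lt_of_le (hult n) hz
        have hρ : Tendsto (fun n : ℕ => ρ (Set.Ioi (u n))) atTop (nhds (ρ (Set.Ici s))) := by
          rw [← hiInter]
          exact tendsto_measure_iInter_atTop
            (fun n => measurableSet_Ioi.nullMeasurableSet)
            (fun n m hnm => Set.Ioi_subset_Ioi (humono hnm))
            ⟨0, measure_ne_top _ _⟩
        have hσ : Tendsto (fun n : ℕ => σ (Set.Ioi (u n))) atTop (nhds (σ (Set.Ici s))) := by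
          rw [← hiInter]
          exact tendsto_measure_iInter_atTop
            (fun n => measurableSet_Ioi.nullMeasurableSet)
            (fun n m hnm => Set.Ioi_subset_Ioi (humono hnm))
            ⟨0, measure_ne_top _ _⟩
        have hcρ : Tendsto (fun n : ℕ => c * ρ (Set.Ioi (u n))) atTop (nhds (c * ρ (Set.Ici s))) :=
          ENNReal.Tendsto.const_mul hρ (Or.inr hc)
        rw [hSeq]
        exact le_of_tendsto_of_tendsto' hσ hcρ (fun n => h (u n) (huge n))
      · -- S = Ioi s
        have hSeq : S = Set.Ioi s := by
          apply le_antisymm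
          · intro z hz
            rcases lt_or_eq_of_le (Set.mem_Ici.mp (hSIci hz)) with h1 | h1
            · exact h1
            · exact absurd (h1 ▸ hz) hsS
          · exact hIoiS
        rw [hSeq]
        exact h s hsa
  -- layer cake
  have hwof : ∀ y, ENNReal.ofReal (f y) = w y := fun y => ENNReal.ofReal_toReal (hwfin y)
  have hmeasρ : Measurable (fun t : ℝ => ρ {y | t < f y}) := by
    apply Antitone.measurable
    intro t t' htt'
    exact measure_mono (fun y hy => lt_of_le_of_lt htt' hy)
  calc ∫⁻ y, w y ∂σ = ∫⁻ y, ENNReal.ofReal (f y) ∂σ := by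
        apply lintegral_congr
        intro y
        exact (hwof y).symm
    _ = ∫⁻ t in Set.Ioi (0:ℝ), σ {y | t < f y} :=
        lintegral_eq_lintegral_meas_lt σ (Eventually.of_forall hfnn) hfmeas.aemeasurable
    _ ≤ ∫⁻ t in Set.Ioi (0:ℝ), c * ρ {y | t < f y} := by
        apply setLIntegral_mono (measurable_const.mul hmeasρ)
        intro t ht
        exact key t ht
    _ = c * ∫⁻ t in Set.Ioi (0:ℝ), ρ {y | t < f y} := lintegral_const_mul' c _ hc
    _ = c * ∫⁻ y, ENNReal.ofReal (f y) ∂ρ := by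
        rw [lintegral_eq_lintegral_meas_lt ρ (Eventually.of_forall hfnn) hfmeas.aemeasurable]
    _ = c * ∫⁻ y, w y ∂ρ := by
        congr 1
        apply lintegral_congr
        intro y
        exact hwof y

/-- Product-event comparison under tail domination. -/
lemma lemB (ρ σ : Measure ℝ) [IsProbabilityMeasure ρ] [IsProbabilityMeasure σ]
    (a x : ℝ) (c : ENNReal) (hc : c ≠ ⊤)
    (h : ∀ y : ℝ, a ≤ y → σ (Set.Ioi y) ≤ c * ρ (Set.Ioi y)) :
    (σ.prod σ) ({p : ℝ × ℝ | a < min p.1 p.2} ∩ {p | x < p.1 + p.2})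
      ≤ c * (c * (ρ.prod ρ) ({p : ℝ × ℝ | a < min p.1 p.2} ∩ {p | x < p.1 + p.2})) := by
  have hE : MeasurableSet ({p : ℝ × ℝ | a < min p.1 p.2} ∩ {p | x < p.1 + p.2}) := by
    apply MeasurableSet.inter
    · exact measurableSet_lt measurable_const (measurable_fst.min measurable_snd)
    · exact measurableSet_lt measurable_const (measurable_fst.add measurable_snd)
  have hsec : ∀ y : ℝ,
      (Prod.mk y ⁻¹' ({p : ℝ × ℝ | a < min p.1 p.2} ∩ {p | x < p.1 + p.2}))
        = if a < y then Set.Ioi (max a (x - y)) else ∅ := by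
    intro y
    ext z
    by_cases hy : a < y
    · simp only [Set.mem_preimage, Set.mem_inter_iff, Set.mem_setOf_eq, if_pos hy,
        Set.mem_Ioi, lt_min_iff, max_lt_iff, sub_lt_iff_lt_add']
      tauto
    · simp only [Set.mem_preimage, Set.mem_inter_iff, Set.mem_setOf_eq, if_neg hy,
        Set.mem_empty_iff_false, iff_false, not_and, lt_min_iff]
      intro h1
      exact absurd h1.1 hy
  have hprod : ∀ (m : Measure ℝ) [IsProbabilityMeasure m],
      (m.prod m) ({p : ℝ × ℝ | a < min p.1 p.2} ∩ {p | x < p.1 + p.2})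
        = ∫⁻ y, (if a < y then m (Set.Ioi (max a (x - y))) else 0) ∂m := by
    intro m _
    rw [Measure.prod_apply hE]
    apply lintegral_congr
    intro y
    rw [hsec y]
    by_cases hy : a < y <;> simp [hy]
  have hwmono : Monotone (fun y : ℝ => if a < y then ρ (Set.Ioi (max a (x - y))) else 0) := by
    intro y z hyz
    by_cases hy : a < y
    · have hz : a < z := lt_of_lt_of_le hy hyz
      simp only [if_pos hy, if_pos hz]
      apply measure_mono
      apply Set.Ioi_subset_Ioi
      exact max_le_max le_rfl (by linarith)
    · simp only [if_neg hy]
      exact zero_le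
  have hwvan : ∀ y : ℝ, y ≤ a → (if a < y then ρ (Set.Ioi (max a (x - y))) else 0) = 0 := by
    intro y hy
    rw [if_neg (not_lt.mpr hy)]
  have hwfin : ∀ y : ℝ, (if a < y then ρ (Set.Ioi (max a (x - y))) else 0) ≠ ⊤ := by
    intro y
    by_cases hy : a < y <;> simp [hy, measure_ne_top]
  calc (σ.prod σ) ({p : ℝ × ℝ | a < min p.1 p.2} ∩ {p | x < p.1 + p.2})
      = ∫⁻ y, (if a < y then σ (Set.Ioi (max a (x - y))) else 0) ∂σ := hprod σ
    _ ≤ ∫⁻ y, c * (if a < y then ρ (Set.Ioi (max a (x - y))) else 0) ∂σ := by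
        apply lintegral_mono
        intro y
        by_cases hy : a < y
        · simp only [if_pos hy]
          exact h _ (le_max_left _ _)
        · simp [hy]
    _ = c * ∫⁻ y, (if a < y then ρ (Set.Ioi (max a (x - y))) else 0) ∂σ :=
        lintegral_const_mul' c _ hc
    _ ≤ c * (c * ∫⁻ y, (if a < y then ρ (Set.Ioi (max a (x - y))) else 0) ∂ρ) :=
        mul_le_mul_right (lemA ρ σ a c hc h _ hwmono hwvan hwfin) c
    _ = c * (c * (ρ.prod ρ) ({p : ℝ × ℝ | a < min p.1 p.2} ∩ {p | x < p.1 + p.2})) := by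
        rw [hprod ρ]

/-- Elementary real division comparison. -/
lemma real_div_le {a1 a2 b1 b2 L K : ℝ} (ha1 : 0 ≤ a1) (ha2 : 0 ≤ a2)
    (hb1 : 0 < b1) (hb2 : 0 < b2) (hL : 0 ≤ L)
    (h1 : a1 ≤ L * a2) (h2 : b2 ≤ K * b1) :
    a1 / b1 ≤ (L * K) * (a2 / b2) := by
  have hK : 0 < K := by nlinarith
  have hrw : (L * K) * (a2 / b2) = (L * K * a2) / b2 := by ring
  rw [hrw, div_le_div_iff₀ hb1 hb2]
  nlinarith [mul_le_mul h1 h2 hb2.le (by positivity : (0:ℝ) ≤ L * a2)]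

theorem stmt9 (μ ν : Measure ℝ) [IsProbabilityMeasure μ] [IsProbabilityMeasure ν]
    (hμnn : μ (Set.Iio 0) = 0) (hμub : ∀ x : ℝ, 0 < μ (Set.Ioi x))
    (hνnn : ν (Set.Iio 0) = 0) (hνub : ∀ x : ℝ, 0 < ν (Set.Ioi x))
    (hJ : MemJg μ) (heq : WeakTailEquiv μ ν) :
    MemJg ν := by
  obtain ⟨⟨c, hc0, hclow⟩, ⟨C, hCup⟩⟩ := heq
  obtain ⟨xl, hl⟩ := eventually_atTop.mp hclow
  obtain ⟨xu, hu⟩ := eventually_atTop.mp hCup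
  set x₀ : ℝ := max xl xu with hx₀
  have hlow : ∀ y, x₀ ≤ y → c * tail ν y ≤ tail μ y :=
    fun y hy => hl y (le_trans (le_max_left _ _) hy)
  have hup : ∀ y, x₀ ≤ y → tail μ y ≤ C * tail ν y :=
    fun y hy => hu y (le_trans (le_max_right _ _) hy)
  have tailμpos : ∀ y, 0 < tail μ y :=
    fun y => ENNReal.toReal_pos (hμub y).ne' (measure_ne_top μ _)
  have tailνpos : ∀ y, 0 < tail ν y :=
    fun y => ENNReal.toReal_pos (hνub y).ne' (measure_ne_top ν _)
  have hC0 : 0 < C := by nlinarith [hup x₀ le_rfl, tailμpos x₀, tailνpos x₀]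
  set c' : ENNReal := ENNReal.ofReal c with hc'
  set C' : ENNReal := ENNReal.ofReal C with hC'
  have hc'0 : c' ≠ 0 := (ENNReal.ofReal_pos.mpr hc0).ne'
  have hc'top : c' ≠ ⊤ := ENNReal.ofReal_ne_top
  have hC'top : C' ≠ ⊤ := ENNReal.ofReal_ne_top
  have hcitop : c'⁻¹ ≠ ⊤ := ENNReal.inv_ne_top.mpr hc'0
  have hlow' : ∀ y, x₀ ≤ y → ν (Set.Ioi y) ≤ c'⁻¹ * μ (Set.Ioi y) := by
    intro y hy
    have h2 := ENNReal.ofReal_le_ofReal (hlow y hy)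
    simp only [tail] at h2
    rw [ENNReal.ofReal_mul hc0.le, ENNReal.ofReal_toReal (measure_ne_top ν _),
      ENNReal.ofReal_toReal (measure_ne_top μ _)] at h2
    calc ν (Set.Ioi y) = c'⁻¹ * (c' * ν (Set.Ioi y)) := by
          rw [← mul_assoc, ENNReal.inv_mul_cancel hc'0 hc'top, one_mul]
      _ ≤ c'⁻¹ * μ (Set.Ioi y) := mul_le_mul_right h2 _
  have hup' : ∀ y, x₀ ≤ y → μ (Set.Ioi y) ≤ C' * ν (Set.Ioi y) := by
    intro y hy
    have h2 := ENNReal.ofReal_le_ofReal (hup y hy)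
    simp only [tail] at h2
    rwa [ENNReal.ofReal_mul hC0.le, ENNReal.ofReal_toReal (measure_ne_top ν _),
      ENNReal.ofReal_toReal (measure_ne_top μ _)] at h2
  -- positivity of denominators
  have hSν : ∀ x : ℝ, 0 < (ν.prod ν) {p : ℝ × ℝ | x < p.1 + p.2} := by
    intro x
    calc (0:ENNReal) < ν (Set.Ioi x) * ν (Set.Ioi 0) :=
          ENNReal.mul_pos (hνub x).ne' (hνub 0).ne'
      _ = (ν.prod ν) (Set.Ioi x ×ˢ Set.Ioi 0) := (Measure.prod_prod _ _).symm
      _ ≤ (ν.prod ν) {p : ℝ × ℝ | x < p.1 + p.2} := by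
          apply measure_mono
          rintro ⟨p1, p2⟩ ⟨h1, h2⟩
          simp only [Set.mem_Ioi] at h1 h2
          simp only [Set.mem_setOf_eq]
          linarith
  have hSμ : ∀ x : ℝ, 0 < (μ.prod μ) {p : ℝ × ℝ | x < p.1 + p.2} := by
    intro x
    calc (0:ENNReal) < μ (Set.Ioi x) * μ (Set.Ioi 0) :=
          ENNReal.mul_pos (hμub x).ne' (hμub 0).ne'
      _ = (μ.prod μ) (Set.Ioi x ×ˢ Set.Ioi 0) := (Measure.prod_prod _ _).symm
      _ ≤ (μ.prod μ) {p : ℝ × ℝ | x < p.1 + p.2} := by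
          apply measure_mono
          rintro ⟨p1, p2⟩ ⟨h1, h2⟩
          simp only [Set.mem_Ioi] at h1 h2
          simp only [Set.mem_setOf_eq]
          linarith
  have hνx₀ : ν (Set.Ioi x₀) ≠ 0 := (hνub x₀).ne'
  set K : ENNReal := C' * C' + 2 * C' * (ν (Set.Ioi x₀))⁻¹ with hK
  have hKtop : K ≠ ⊤ := by
    have hinv : (ν (Set.Ioi x₀))⁻¹ ≠ ⊤ := ENNReal.inv_ne_top.mpr hνx₀
    refine ENNReal.add_ne_top.mpr ⟨ENNReal.mul_ne_top hC'top hC'top, ?_⟩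
    exact ENNReal.mul_ne_top (ENNReal.mul_ne_top (by simp) hC'top) hinv
  -- denominator comparison
  have hden : ∀ x : ℝ, 2 * x₀ ≤ x →
      (μ.prod μ) {p : ℝ × ℝ | x < p.1 + p.2} ≤ K * (ν.prod ν) {p : ℝ × ℝ | x < p.1 + p.2} := by
    intro x hx
    have hxx₀ : x₀ ≤ x - x₀ := by linarith
    have hsub : {p : ℝ × ℝ | x < p.1 + p.2} ⊆
        (({p : ℝ × ℝ | x₀ < min p.1 p.2} ∩ {p | x < p.1 + p.2}) ∪
          ((Set.Iic x₀ ×ˢ Set.Ioi (x - x₀)) ∪ (Set.Ioi (x - x₀) ×ˢ Set.Iic x₀))) := by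
      rintro ⟨p1, p2⟩ hp
      simp only [Set.mem_setOf_eq] at hp
      by_cases h1 : x₀ < p1
      · by_cases h2 : x₀ < p2
        · left
          exact ⟨lt_min h1 h2, hp⟩
        · right; right
          push_neg at h2
          exact ⟨by simp only [Set.mem_Ioi]; linarith, by simpa using h2⟩
      · right; left
        push_neg at h1
        exact ⟨by simpa using h1, by simp only [Set.mem_Ioi]; linarith⟩
    have hEbound : (μ.prod μ) ({p : ℝ × ℝ | x₀ < min p.1 p.2} ∩ {p | x < p.1 + p.2})
        ≤ C' * (C' * (ν.prod ν) ({p : ℝ × ℝ | x₀ < min p.1 p.2} ∩ {p | x < p.1 + p.2})) :=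
      lemB ν μ x₀ x C' hC'top hup'
    have hrect : ∀ s t : Set ℝ, μ s ≤ 1 → (μ.prod μ) (s ×ˢ t) ≤ μ t := by
      intro s t hs
      rw [Measure.prod_prod]
      calc μ s * μ t ≤ 1 * μ t := mul_le_mul_left hs _
        _ = μ t := one_mul _
    have hrect1 : (μ.prod μ) (Set.Iic x₀ ×ˢ Set.Ioi (x - x₀)) ≤ C' * ν (Set.Ioi (x - x₀)) :=
      le_trans (hrect _ _ prob_le_one) (hup' _ hxx₀)
    have hrect2 : (μ.prod μ) (Set.Ioi (x - x₀) ×ˢ Set.Iic x₀) ≤ C' * ν (Set.Ioi (x - x₀)) := by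
      rw [Measure.prod_prod]
      calc μ (Set.Ioi (x - x₀)) * μ (Set.Iic x₀) ≤ μ (Set.Ioi (x - x₀)) * 1 :=
            mul_le_mul_right prob_le_one _
        _ = μ (Set.Ioi (x - x₀)) := mul_one _
        _ ≤ C' * ν (Set.Ioi (x - x₀)) := hup' _ hxx₀
    have hν1 : ν (Set.Ioi (x - x₀)) ≤ (ν (Set.Ioi x₀))⁻¹ * (ν.prod ν) {p : ℝ × ℝ | x < p.1 + p.2} := by
      have hr : ν (Set.Ioi (x - x₀)) * ν (Set.Ioi x₀) ≤ (ν.prod ν) {p : ℝ × ℝ | x < p.1 + p.2} := by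
        rw [← Measure.prod_prod]
        apply measure_mono
        rintro ⟨p1, p2⟩ ⟨h1, h2⟩
        simp only [Set.mem_Ioi] at h1 h2
        simp only [Set.mem_setOf_eq]
        linarith
      calc ν (Set.Ioi (x - x₀))
          = (ν (Set.Ioi x₀))⁻¹ * (ν (Set.Ioi (x - x₀)) * ν (Set.Ioi x₀)) := by
            rw [mul_comm (ν (Set.Ioi (x - x₀))), ← mul_assoc,
              ENNReal.inv_mul_cancel hνx₀ (measure_ne_top _ _), one_mul]
        _ ≤ (ν (Set.Ioi x₀))⁻¹ * (ν.prod ν) {p : ℝ × ℝ | x < p.1 + p.2} :=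
            mul_le_mul_right hr _
    calc (μ.prod μ) {p : ℝ × ℝ | x < p.1 + p.2}
        ≤ (μ.prod μ) ({p : ℝ × ℝ | x₀ < min p.1 p.2} ∩ {p | x < p.1 + p.2}) +
            ((μ.prod μ) (Set.Iic x₀ ×ˢ Set.Ioi (x - x₀)) +
              (μ.prod μ) (Set.Ioi (x - x₀) ×ˢ Set.Iic x₀)) := by
          refine le_trans (measure_mono hsub) ?_
          refine le_trans (measure_union_le _ _) ?_
          exact add_le_add_right (measure_union_le _ _) _
      _ ≤ C' * (C' * (ν.prod ν) {p : ℝ × ℝ | x < p.1 + p.2}) +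
            ((C' * ((ν (Set.Ioi x₀))⁻¹ * (ν.prod ν) {p : ℝ × ℝ | x < p.1 + p.2})) +
              (C' * ((ν (Set.Ioi x₀))⁻¹ * (ν.prod ν) {p : ℝ × ℝ | x < p.1 + p.2}))) := by
          refine add_le_add ?_ (add_le_add ?_ ?_)
          · exact le_trans hEbound
              (mul_le_mul_right (mul_le_mul_right (measure_mono Set.inter_subset_right) _) _)
          · exact le_trans hrect1 (mul_le_mul_right hν1 _)
          · exact le_trans hrect2 (mul_le_mul_right hν1 _)
      _ = K * (ν.prod ν) {p : ℝ × ℝ | x < p.1 + p.2} := by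
          rw [hK]; ring
  -- main argument
  intro g hg0 hgmono hgunb
  obtain ⟨x₂, hx₂⟩ := hgunb x₀
  have hnum : ∀ x : ℝ, x₂ ≤ x →
      (ν.prod ν) ({p : ℝ × ℝ | g x < min p.1 p.2} ∩ {p | x < p.1 + p.2})
        ≤ c'⁻¹ * (c'⁻¹ * (μ.prod μ) ({p : ℝ × ℝ | g x < min p.1 p.2} ∩ {p | x < p.1 + p.2})) := by
    intro x hx
    have hgx : x₀ ≤ g x := le_of_lt (lt_of_lt_of_le hx₂ (hgmono hx))
    exact lemB μ ν (g x) x c'⁻¹ hcitop (fun y hy => hlow' y (le_trans hgx hy))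
  set M : ℝ := (c'⁻¹ * c'⁻¹).toReal * K.toReal with hM
  have hJg := hJ g hg0 hgmono hgunb
  refine squeeze_zero' (g := fun x => M * condPair μ {p | g x < min p.1 p.2} x)
    (Eventually.of_forall fun x => ?_) ?_ ?_
  · exact div_nonneg ENNReal.toReal_nonneg ENNReal.toReal_nonneg
  · filter_upwards [eventually_ge_atTop x₂, eventually_ge_atTop (2 * x₀)] with x hxa hxb
    have ha := hnum x hxa
    have hb := hden x hxb
    rw [← mul_assoc] at ha
    have hLfin : (c'⁻¹ * c'⁻¹ : ENNReal) ≠ ⊤ := ENNReal.mul_ne_top hcitop hcitop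
    have h1 : ((ν.prod ν) ({p : ℝ × ℝ | g x < min p.1 p.2} ∩ {p | x < p.1 + p.2})).toReal
        ≤ (c'⁻¹ * c'⁻¹).toReal *
          ((μ.prod μ) ({p : ℝ × ℝ | g x < min p.1 p.2} ∩ {p | x < p.1 + p.2})).toReal := by
      have := ENNReal.toReal_mono
        (ENNReal.mul_ne_top hLfin (measure_ne_top _ _)) ha
      rwa [ENNReal.toReal_mul] at this
    have h2 : ((μ.prod μ) {p : ℝ × ℝ | x < p.1 + p.2}).toReal
        ≤ K.toReal * ((ν.prod ν) {p : ℝ × ℝ | x < p.1 + p.2}).toReal := by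
      have := ENNReal.toReal_mono (ENNReal.mul_ne_top hKtop (measure_ne_top _ _)) hb
      rwa [ENNReal.toReal_mul] at this
    have hb1 : 0 < ((ν.prod ν) {p : ℝ × ℝ | x < p.1 + p.2}).toReal :=
      ENNReal.toReal_pos (hSν x).ne' (measure_ne_top _ _)
    have hb2 : 0 < ((μ.prod μ) {p : ℝ × ℝ | x < p.1 + p.2}).toReal :=
      ENNReal.toReal_pos (hSμ x).ne' (measure_ne_top _ _)
    exact real_div_le ENNReal.toReal_nonneg ENNReal.toReal_nonneg hb1 hb2
      ENNReal.toReal_nonneg h1 h2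
  · have := hJg.const_mul M
    simpa using this
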